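/- Upper bound on modified volume via slicing: for any feasible axis-parallel packing of 3D boxes into a strip [0,1]×[0,1]×[0,H] (no rotations, no overlap), the total modified volume Σ_R f_k(l(R))·g(w(R))·h(R) is at most T_k · H, where f_k/T_k and g are dual feasible functions. -/

import Mathlib

/-- The sequence from the Harmonic algorithm: `t 1 = 1`, `t (i+1) = t i * (t i + 1)`. -/
def tSeq : ℕ → ℕ
  | 0 => 1
  | 1 => 1
  | (n + 2) => tSeq (n + 1) * (tSeq (n + 1) + 1)

/-- The harmonic weighting function `f_k`. -/
noncomputable def fHarm (k : ℕ) (x : ℝ) : ℝ :=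
  if x ≤ 1 / k then k * x / ((k : ℝ) - 1) else 1 / (⌊1 / x⌋ : ℝ)

/-- The harmonic constant `T_k`, where `m` satisfies `t_m < k ≤ t_{m+1}`. -/
noncomputable def TkVal (k m : ℕ) : ℝ :=
  (∑ i ∈ Finset.Icc 1 m, (1 : ℝ) / (tSeq i : ℝ)) +
    (1 / (tSeq (m + 1) : ℝ)) * ((k : ℝ) / ((k : ℝ) - 1))

/-- A dual feasible function maps `[0,1]` to `[0,1]` and satisfies `Σ f (x i) ≤ 1`
whenever the `x i` lie in `[0,1]` and `Σ x i ≤ 1`. -/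
def DualFeasible (f : ℝ → ℝ) : Prop :=
  (∀ x ∈ Set.Icc (0 : ℝ) 1, f x ∈ Set.Icc (0 : ℝ) 1) ∧
  ∀ (n : ℕ) (x : Fin n → ℝ), (∀ i, x i ∈ Set.Icc (0 : ℝ) 1) → (∑ i, x i) ≤ 1 →
    (∑ i, f (x i)) ≤ 1

open scoped ENNReal

lemma tSeq_pos : ∀ n, 0 < tSeq n
  | 0 => by simp [tSeq]
  | 1 => by simp [tSeq]
  | (n+2) => by
      rw [tSeq]
      exact Nat.mul_pos (tSeq_pos (n+1)) (Nat.succ_pos _)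

lemma tSeq_one_le (n : ℕ) : 1 ≤ tSeq n := tSeq_pos n

lemma tSeq_succ (n : ℕ) (hn : 1 ≤ n) : tSeq (n+1) = tSeq n * (tSeq n + 1) := by
  obtain ⟨p, rfl⟩ : ∃ p, n = p + 1 := ⟨n - 1, by omega⟩
  rfl

lemma tSeq_le_succ (n : ℕ) : tSeq n ≤ tSeq (n+1) := by
  cases n with
  | zero => simp [tSeq]
  | succ p =>
      rw [tSeq_succ (p+1) (by omega)]
      exact Nat.le_mul_of_pos_right _ (by positivity)

lemma tSeq_mono : Monotone tSeq := monotone_nat_of_le_succ tSeq_le_succ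

lemma tSeq_posR (n : ℕ) : (0:ℝ) < (tSeq n : ℝ) := by exact_mod_cast tSeq_pos n

lemma fHarm_nonneg (k : ℕ) (hk : 2 ≤ k) {x : ℝ} (hx : 0 ≤ x) : 0 ≤ fHarm k x := by
  have hk2 : (2:ℝ) ≤ (k:ℝ) := by exact_mod_cast hk
  unfold fHarm
  split
  · apply div_nonneg (by positivity) (by linarith)
  · rename_i hle
    push_neg at hle
    have hxpos : 0 < x := lt_of_le_of_lt (by positivity) hle
    apply one_div_nonneg.2
    exact_mod_cast Int.floor_nonneg.2 (by positivity)

set_option maxHeartbeats 1000000 in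
lemma lemA_aux {ι : Type*} [DecidableEq ι] (k m : ℕ) (hk : 2 ≤ k)
    (hm1 : tSeq m < k) (hm2 : k ≤ tSeq (m+1)) :
    ∀ d j : ℕ, 1 ≤ j → j + d = m + 1 →
    ∀ (s : Finset ι) (x : ι → ℝ), (∀ i ∈ s, 0 ≤ x i) →
    (∑ i ∈ s, x i) ≤ 1 / (tSeq j : ℝ) →
    (∑ i ∈ s, fHarm k (x i)) ≤
      (∑ i ∈ Finset.Icc j m, 1 / (tSeq i : ℝ)) +
        (k / ((k:ℝ) - 1)) * (1 / (tSeq (m+1) : ℝ)) := by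
  have hkR : (2:ℝ) ≤ (k:ℝ) := by exact_mod_cast hk
  have hk1 : (0:ℝ) < (k:ℝ) - 1 := by linarith
  intro d
  induction d with
  | zero =>
    intro j hj1 hj2 s x hx hsum
    have hj : j = m + 1 := by omega
    subst hj
    have hlin : ∀ i ∈ s, x i ≤ 1 / (k:ℝ) := by
      intro i hi
      have h1 : x i ≤ ∑ i ∈ s, x i := Finset.single_le_sum hx hi
      have h2 : (1:ℝ) / (tSeq (m+1) : ℝ) ≤ 1 / (k:ℝ) := by
        apply one_div_le_one_div_of_le (by linarith)
        exact_mod_cast hm2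
      linarith
    have : (∑ i ∈ s, fHarm k (x i)) = (k / ((k:ℝ)-1)) * ∑ i ∈ s, x i := by
      rw [Finset.mul_sum]
      apply Finset.sum_congr rfl
      intro i hi
      unfold fHarm
      rw [if_pos (hlin i hi)]
      ring
    rw [this, Finset.Icc_eq_empty (by omega), Finset.sum_empty, zero_add]
    apply mul_le_mul_of_nonneg_left hsum (by positivity)
  | succ d ih =>
    intro j hj1 hj2 s x hx hsum
    have hjm : j ≤ m := by omega
    have htjk : tSeq j < k := lt_of_le_of_lt (tSeq_mono hjm) hm1
    have hT1 : (1:ℝ) ≤ (tSeq j : ℝ) := by exact_mod_cast tSeq_one_le j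
    have hTpos : (0:ℝ) < (tSeq j : ℝ) := by linarith
    have hts : (tSeq (j+1) : ℝ) = (tSeq j : ℝ) * ((tSeq j : ℝ) + 1) := by
      rw [tSeq_succ j hj1]; push_cast; ring
    have hkey : 1/(tSeq j : ℝ) - 1/((tSeq j : ℝ)+1) = 1/(tSeq (j+1) : ℝ) := by
      rw [hts]; field_simp; try ring; try tauto
    by_cases hex : ∃ i ∈ s, 1/((tSeq j : ℝ)+1) < x i
    · obtain ⟨i₀, hi₀s, hi₀⟩ := hex
      have hxub : x i₀ ≤ 1/(tSeq j : ℝ) := le_trans (Finset.single_le_sum hx hi₀s) hsum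
      have hx0pos : 0 < x i₀ := lt_of_le_of_lt (by positivity) hi₀
      have hfk : 1/(k:ℝ) ≤ 1/((tSeq j : ℝ)+1) := by
        apply one_div_le_one_div_of_le (by linarith)
        have : (tSeq j + 1 : ℕ) ≤ k := htjk
        exact_mod_cast this
      have hnotle : ¬ (x i₀ ≤ 1/(k:ℝ)) := not_le.2 (lt_of_le_of_lt hfk hi₀)
      have hfloor : ⌊1 / x i₀⌋ = (tSeq j : ℤ) := by
        rw [Int.floor_eq_iff]
        constructor
        · rw [le_div_iff₀ hx0pos]
          have h9 : (tSeq j : ℝ) * x i₀ ≤ (tSeq j : ℝ) * (1/(tSeq j : ℝ)) :=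
            mul_le_mul_of_nonneg_left hxub hTpos.le
          rw [mul_one_div, div_self hTpos.ne'] at h9
          push_cast
          linarith
        · push_cast
          rw [div_lt_iff₀ hx0pos]
          have h9 : ((tSeq j : ℝ)+1) * (1/((tSeq j : ℝ)+1)) < ((tSeq j : ℝ)+1) * x i₀ :=
            mul_lt_mul_of_pos_left hi₀ (by linarith)
          rw [mul_one_div, div_self (by linarith : ((tSeq j : ℝ)+1) ≠ 0)] at h9
          linarith
      have hf₀ : fHarm k (x i₀) = 1/(tSeq j : ℝ) := by
        unfold fHarm
        rw [if_neg hnotle, hfloor]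
        norm_num
      have hsum' : (∑ i ∈ s.erase i₀, x i) ≤ 1/(tSeq (j+1) : ℝ) := by
        have he : (∑ i ∈ s.erase i₀, x i) = (∑ i ∈ s, x i) - x i₀ :=
          Finset.sum_erase_eq_sub hi₀s
        rw [he, ← hkey]
        linarith
      have ihap := ih (j+1) (by omega) (by omega) (s.erase i₀) x
        (fun i hi => hx i (Finset.mem_of_mem_erase hi)) hsum'
      have hsplit : (∑ i ∈ s, fHarm k (x i)) =
          fHarm k (x i₀) + ∑ i ∈ s.erase i₀, fHarm k (x i) :=
        (Finset.add_sum_erase s _ hi₀s).symm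
      have hIcc : (∑ i ∈ Finset.Icc j m, 1 / (tSeq i : ℝ)) =
          1/(tSeq j : ℝ) + ∑ i ∈ Finset.Icc (j+1) m, 1 / (tSeq i : ℝ) := by
        rw [show Finset.Icc j m = insert j (Finset.Icc (j+1) m) by
          ext a; simp [Finset.mem_Icc, Finset.mem_insert]; omega]
        rw [Finset.sum_insert (by simp [Finset.mem_Icc])]
      rw [hsplit, hf₀, hIcc]
      linarith
    · push_neg at hex
      rcases Nat.lt_or_ge (tSeq j + 1) k with hk2 | hk2
      · -- k ≥ tSeq j + 2
        have hk2R : (tSeq j : ℝ) + 2 ≤ (k:ℝ) := by exact_mod_cast hk2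
        have hpt : ∀ i ∈ s, fHarm k (x i) ≤ (1 + 1/((tSeq j : ℝ)+1)) * x i := by
          intro i hi
          have hx0 := hx i hi
          have hxle := hex i hi
          unfold fHarm
          split
          · rename_i hlin
            have h1 : (k:ℝ)/((k:ℝ)-1) ≤ 1 + 1/((tSeq j : ℝ)+1) := by
              rw [div_le_iff₀ hk1]
              have hTk : (tSeq j : ℝ) + 1 ≤ (k:ℝ) - 1 := by linarith
              have h2 : (1:ℝ) ≤ ((k:ℝ)-1) / ((tSeq j : ℝ)+1) := by
                rw [le_div_iff₀ (by linarith)]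
                linarith
              have h3 : ((k:ℝ)-1) + ((k:ℝ)-1)/((tSeq j : ℝ)+1) ≥ (k:ℝ) - 1 + 1 := by
                linarith
              calc (k:ℝ) = (k:ℝ) - 1 + 1 := by ring
                _ ≤ ((k:ℝ)-1) + ((k:ℝ)-1)/((tSeq j : ℝ)+1) := h3
                _ = (1 + 1/((tSeq j : ℝ)+1)) * ((k:ℝ)-1) := by ring
            calc (k:ℝ) * x i / ((k:ℝ)-1) = ((k:ℝ)/((k:ℝ)-1)) * x i := by ring
              _ ≤ (1 + 1/((tSeq j : ℝ)+1)) * x i :=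
                  mul_le_mul_of_nonneg_right h1 hx0
          · rename_i hlin
            push_neg at hlin
            have hxpos : 0 < x i := lt_of_le_of_lt (by positivity) hlin
            have hq : ((tSeq j : ℤ) + 1) ≤ ⌊1 / x i⌋ := by
              apply Int.le_floor.2
              push_cast
              rw [le_div_iff₀ hxpos]
              have : x i * ((tSeq j : ℝ) + 1) ≤ (1/((tSeq j : ℝ)+1)) * ((tSeq j : ℝ)+1) := by
                apply mul_le_mul_of_nonneg_right hxle (by linarith)
              rw [one_div_mul_cancel (by linarith)] at this
              linarith
            have hqR : (tSeq j : ℝ) + 1 ≤ (⌊1 / x i⌋ : ℝ) := by exact_mod_cast hq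
            have hqpos : (0:ℝ) < (⌊1 / x i⌋ : ℝ) := by linarith
            have hlb : 1 / ((⌊1 / x i⌋ : ℝ) + 1) < x i := by
              rw [div_lt_iff₀ (by linarith)]
              have h5 : 1 / x i < (⌊1 / x i⌋ : ℝ) + 1 := Int.lt_floor_add_one _
              calc (1:ℝ) = (1 / x i) * x i := by field_simp
                _ < ((⌊1 / x i⌋ : ℝ) + 1) * x i := by
                    apply mul_lt_mul_of_pos_right h5 hxpos
                _ = x i * ((⌊1 / x i⌋ : ℝ) + 1) := by ring
            -- 1/q ≤ (1+1/(T+1)) x  given x > 1/(q+1), q ≥ T+1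
            rw [div_le_iff₀ hqpos]
            set T := (tSeq j : ℝ)
            set q := (⌊1 / x i⌋ : ℝ)
            have step : (1 + 1/(T+1)) * (1/(q+1)) * q ≥ 1 := by
              rw [ge_iff_le, show (1 + 1/(T+1)) * (1/(q+1)) * q = ((T+2) * q) / ((T+1)*(q+1)) by
                field_simp
                try ring
                try tauto]
              rw [le_div_iff₀ (by positivity)]
              nlinarith
            have hmono : (1 + 1/(T+1)) * (1/(q+1)) * q ≤ (1 + 1/(T+1)) * x i * q := by
              apply mul_le_mul_of_nonneg_right _ (by linarith)
              apply mul_le_mul_of_nonneg_left hlb.le (by positivity)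
            linarith
        have hsb : (∑ i ∈ s, fHarm k (x i)) ≤ 1/(tSeq j : ℝ) + 1/(tSeq (j+1) : ℝ) := by
          calc (∑ i ∈ s, fHarm k (x i)) ≤ ∑ i ∈ s, (1 + 1/((tSeq j : ℝ)+1)) * x i :=
                Finset.sum_le_sum hpt
            _ = (1 + 1/((tSeq j : ℝ)+1)) * ∑ i ∈ s, x i := by rw [Finset.mul_sum]
            _ ≤ (1 + 1/((tSeq j : ℝ)+1)) * (1/(tSeq j : ℝ)) := by
                apply mul_le_mul_of_nonneg_left hsum (by positivity)
            _ = 1/(tSeq j : ℝ) + 1/(tSeq (j+1) : ℝ) := by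
                rw [hts]; field_simp; try ring; try tauto
        rcases eq_or_lt_of_le hjm with hjm' | hjm'
        · subst hjm'
          rw [show Finset.Icc j j = {j} by simp, Finset.sum_singleton]
          have : (1:ℝ) ≤ (k:ℝ)/((k:ℝ)-1) := by
            rw [le_div_iff₀ hk1]; linarith
          have h6 : 1/(tSeq (j+1) : ℝ) ≤ (k / ((k:ℝ)-1)) * (1/(tSeq (j+1) : ℝ)) := by
            nlinarith [one_div_pos.2 (tSeq_posR (j+1))]
          linarith
        · have hsub : ({j, j+1} : Finset ℕ) ⊆ Finset.Icc j m := by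
            intro a ha
            simp only [Finset.mem_insert, Finset.mem_singleton] at ha
            simp only [Finset.mem_Icc]
            omega
          have h7 : 1/(tSeq j : ℝ) + 1/(tSeq (j+1) : ℝ) ≤
              ∑ i ∈ Finset.Icc j m, 1 / (tSeq i : ℝ) := by
            have hp : (∑ i ∈ ({j, j+1} : Finset ℕ), 1/(tSeq i : ℝ)) =
                1/(tSeq j : ℝ) + 1/(tSeq (j+1) : ℝ) := Finset.sum_pair (by omega)
            rw [← hp]
            apply Finset.sum_le_sum_of_subset_of_nonneg hsub
            intro a _ _
            positivity
          have h8 : (0:ℝ) ≤ (k / ((k:ℝ)-1)) * (1/(tSeq (m+1) : ℝ)) := by positivity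
          linarith
      · -- k = tSeq j + 1
        have hkeq : k = tSeq j + 1 := by omega
        have hjm' : j = m := by
          by_contra hne
          have hj1m : j + 1 ≤ m := by omega
          have h1 : tSeq (j+1) ≤ tSeq m := tSeq_mono hj1m
          have h2 : tSeq j + 1 ≤ tSeq (j+1) := by
            rw [tSeq_succ j hj1]
            calc tSeq j + 1 = 1 * (tSeq j + 1) := (one_mul _).symm
              _ ≤ tSeq j * (tSeq j + 1) := Nat.mul_le_mul_right _ (tSeq_pos j)
          omega
        subst hjm'
        have hkR' : ((k:ℝ)) = (tSeq j : ℝ) + 1 := by exact_mod_cast hkeq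
        have hlin : ∀ i ∈ s, x i ≤ 1 / (k:ℝ) := by
          intro i hi
          have := hex i hi
          rw [hkR']
          linarith [hex i hi]
        have hsf : (∑ i ∈ s, fHarm k (x i)) = (k / ((k:ℝ)-1)) * ∑ i ∈ s, x i := by
          rw [Finset.mul_sum]
          apply Finset.sum_congr rfl
          intro i hi
          unfold fHarm
          rw [if_pos (hlin i hi)]
          ring
        rw [hsf, show Finset.Icc j j = {j} by simp, Finset.sum_singleton]
        have hb : (k / ((k:ℝ)-1)) * (∑ i ∈ s, x i) ≤ (k / ((k:ℝ)-1)) * (1/(tSeq j : ℝ)) := by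
          apply mul_le_mul_of_nonneg_left hsum (by positivity)
        have heq : (k / ((k:ℝ)-1)) * (1/(tSeq j : ℝ)) =
            1/(tSeq j : ℝ) + (k / ((k:ℝ)-1)) * (1/(tSeq (j+1) : ℝ)) := by
          rw [hts, hkR']
          field_simp
          rw [add_sub_cancel_right, add_div, div_self hTpos.ne']
        linarith

lemma lemA {ι : Type*} [DecidableEq ι] (k m : ℕ) (hk : 2 ≤ k)
    (hm1 : tSeq m < k) (hm2 : k ≤ tSeq (m+1))
    (s : Finset ι) (x : ι → ℝ) (hx : ∀ i ∈ s, 0 ≤ x i)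
    (hsum : (∑ i ∈ s, x i) ≤ 1) :
    (∑ i ∈ s, fHarm k (x i)) ≤ TkVal k m := by
  have hm : 1 ≤ m := by
    by_contra hm
    have : m = 0 := by omega
    subst this
    simp [tSeq] at hm2
    omega
  have h1 : (tSeq 1 : ℝ) = 1 := by norm_num [tSeq]
  have := lemA_aux k m hk hm1 hm2 m 1 le_rfl (by omega) s x hx (by rw [h1]; simpa using hsum)
  unfold TkVal
  linarith


lemma dff_finset {g : ℝ → ℝ} (hg : DualFeasible g) {ι : Type*} (s : Finset ι)
    (xx : ι → ℝ) (hx : ∀ i ∈ s, xx i ∈ Set.Icc (0:ℝ) 1)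
    (hsum : (∑ i ∈ s, xx i) ≤ 1) : (∑ i ∈ s, g (xx i)) ≤ 1 := by
  classical
  obtain ⟨e⟩ : Nonempty (s ≃ Fin s.card) := ⟨s.equivFin⟩
  have h1 : ∀ (F : ι → ℝ), (∑ i ∈ s, F i) = ∑ j : Fin s.card, F (e.symm j) := by
    intro F
    rw [← Finset.sum_coe_sort s F]
    exact Fintype.sum_equiv e.symm (fun j => F (e.symm j)) (fun i => F i) (fun _ => rfl) |>.symm
  rw [h1]
  apply hg.2 s.card (fun j => xx (e.symm j))
  · intro j
    exact hx _ (e.symm j).2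
  · rw [← h1]; exact hsum

lemma dff_zero {g : ℝ → ℝ} (hg : DualFeasible g) : g 0 = 0 := by
  have h0 : g 0 ∈ Set.Icc (0:ℝ) 1 := hg.1 0 (by norm_num)
  by_contra hne
  have hpos : 0 < g 0 := lt_of_le_of_ne h0.1 (Ne.symm hne)
  obtain ⟨n, hn⟩ := exists_nat_gt (1 / g 0)
  have h2 := hg.2 n (fun _ => 0) (fun _ => by norm_num) (by simp)
  simp only [Finset.sum_const, Finset.card_univ, Fintype.card_fin, nsmul_eq_mul] at h2
  have h3 : 1 / g 0 * g 0 < (n:ℝ) * g 0 := mul_lt_mul_of_pos_right hn hpos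
  rw [one_div_mul_cancel hpos.ne'] at h3
  linarith

open MeasureTheory in
/-- Core slicing bound: weighted intervals in `[0,H]` with pointwise coverage `≤ b`. -/
lemma integ_bound {ι : Type*} [DecidableEq ι] (s : Finset ι) (A B u : ι → ℝ) (b H : ℝ)
    (hb : 0 ≤ b) (hH : 0 ≤ H) (hu : ∀ i ∈ s, 0 ≤ u i)
    (hAB : ∀ i ∈ s, 0 ≤ A i ∧ A i ≤ B i ∧ B i ≤ H)
    (hcov : ∀ t : ℝ, (∑ i ∈ s.filter (fun i => A i < t ∧ t < B i), u i) ≤ b) :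
    (∑ i ∈ s, u i * (B i - A i)) ≤ b * H := by
  classical
  set F : ι → ℝ → ℝ≥0∞ :=
    fun i => (Set.Ioo (A i) (B i)).indicator (fun _ => ENNReal.ofReal (u i)) with hF
  have hmeas : ∀ i, Measurable (F i) := fun i =>
    measurable_const.indicator measurableSet_Ioo
  have hpt : ∀ t : ℝ, (∑ i ∈ s, F i t) ≤
      (Set.Icc (0:ℝ) H).indicator (fun _ => ENNReal.ofReal b) t := by
    intro t
    have e1 : (∑ i ∈ s, F i t) = ∑ i ∈ s.filter (fun i => A i < t ∧ t < B i),
        ENNReal.ofReal (u i) := by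
      rw [Finset.sum_filter]
      apply Finset.sum_congr rfl
      intro i _
      simp only [hF, Set.indicator_apply, Set.mem_Ioo]
    rw [e1]
    by_cases ht : t ∈ Set.Icc (0:ℝ) H
    · rw [Set.indicator_of_mem ht]
      rw [← ENNReal.ofReal_sum_of_nonneg (fun i hi => hu i (Finset.mem_of_mem_filter i hi))]
      exact ENNReal.ofReal_le_ofReal (hcov t)
    · rw [Set.indicator_of_notMem ht]
      have : s.filter (fun i => A i < t ∧ t < B i) = ∅ := by
        apply Finset.filter_eq_empty_iff.2
        intro i hi hcon
        obtain ⟨h1, h2, h3⟩ := hAB i hi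
        exact ht ⟨by linarith [hcon.1], by linarith [hcon.2]⟩
      simp [this]
  have hle : (∑ i ∈ s, ENNReal.ofReal (u i) * ENNReal.ofReal (B i - A i)) ≤
      ENNReal.ofReal b * ENNReal.ofReal H := by
    have e2 : ∀ i ∈ s, ENNReal.ofReal (u i) * ENNReal.ofReal (B i - A i) = ∫⁻ t, F i t := by
      intro i hi
      rw [hF]
      simp only
      rw [lintegral_indicator measurableSet_Ioo _, setLIntegral_const, Real.volume_Ioo]
    calc ∑ i ∈ s, ENNReal.ofReal (u i) * ENNReal.ofReal (B i - A i)
        = ∑ i ∈ s, ∫⁻ t, F i t := Finset.sum_congr rfl e2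
      _ = ∫⁻ t, ∑ i ∈ s, F i t := (lintegral_finset_sum s (fun i _ => hmeas i)).symm
      _ ≤ ∫⁻ t, (Set.Icc (0:ℝ) H).indicator (fun _ => ENNReal.ofReal b) t :=
          lintegral_mono hpt
      _ = ENNReal.ofReal b * volume (Set.Icc (0:ℝ) H) := by
          rw [lintegral_indicator measurableSet_Icc _, setLIntegral_const]
      _ = ENNReal.ofReal b * ENNReal.ofReal H := by rw [Real.volume_Icc]; norm_num
  have e3 : ENNReal.ofReal (∑ i ∈ s, u i * (B i - A i)) ≤ ENNReal.ofReal (b * H) := by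
    rw [ENNReal.ofReal_sum_of_nonneg (fun i hi =>
      mul_nonneg (hu i hi) (by linarith [(hAB i hi).2.1]))]
    rw [ENNReal.ofReal_mul hb]
    calc ∑ i ∈ s, ENNReal.ofReal (u i * (B i - A i))
        = ∑ i ∈ s, ENNReal.ofReal (u i) * ENNReal.ofReal (B i - A i) := by
          apply Finset.sum_congr rfl
          intro i hi
          rw [ENNReal.ofReal_mul (hu i hi)]
      _ ≤ ENNReal.ofReal b * ENNReal.ofReal H := hle
  exact (ENNReal.ofReal_le_ofReal_iff (by positivity)).1 e3

lemma coloring {ι : Type*} [DecidableEq ι] (K : ℕ) (a b : ι → ℝ) :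
    ∀ s : Finset ι, (∀ i ∈ s, a i < b i) →
    (∀ t : ℝ, (s.filter (fun i => a i < t ∧ t < b i)).card ≤ K) →
    ∃ c : ι → ℕ, (∀ i ∈ s, c i < K) ∧
      ∀ i ∈ s, ∀ j ∈ s, i ≠ j → c i = c j → (b i ≤ a j ∨ b j ≤ a i) := by
  classical
  intro s
  induction s using Finset.strongInduction with
  | _ s ih =>
    intro hab hcov
    rcases Finset.eq_empty_or_nonempty s with rfl | hne
    · exact ⟨fun _ => 0, by simp, by simp⟩
    · obtain ⟨i₀, hi₀s, hmax⟩ := Finset.exists_max_image s a hne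
      set s' := s.erase i₀ with hs'
      have hsub : s' ⊂ s := Finset.erase_ssubset hi₀s
      obtain ⟨c, hcK, hcd⟩ := ih s' hsub (fun i hi => hab i (Finset.mem_of_mem_erase hi))
        (fun t => le_trans (Finset.card_le_card
          (Finset.filter_subset_filter _ (Finset.erase_subset _ _))) (hcov t))
      set N := s'.filter (fun j => a j < b i₀ ∧ a i₀ < b j) with hN
      have hNsub : ∀ j ∈ N, j ∈ s' := fun j hj => Finset.mem_of_mem_filter j hj
      have hi₀N : i₀ ∉ N := fun h => Finset.notMem_erase i₀ s (hNsub i₀ h)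
      set μ := (insert i₀ N).inf' (Finset.insert_nonempty _ _) b with hμ
      have hμi : ∀ j ∈ insert i₀ N, a i₀ < b j := by
        intro j hj
        rcases Finset.mem_insert.1 hj with rfl | hj'
        · exact hab _ hi₀s
        · exact ((Finset.mem_filter.1 hj').2).2
      have hμpos : a i₀ < μ := (Finset.lt_inf'_iff _).2 hμi
      set t₀ := (a i₀ + μ)/2 with ht₀
      have ht1 : a i₀ < t₀ := by rw [ht₀]; linarith
      have ht2 : t₀ < μ := by rw [ht₀]; linarith
      have hcover : insert i₀ N ⊆ s.filter (fun i => a i < t₀ ∧ t₀ < b i) := by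
        intro j hj
        have hjs : j ∈ s := by
          rcases Finset.mem_insert.1 hj with rfl | hj'
          · exact hi₀s
          · exact Finset.mem_of_mem_erase (hNsub j hj')
        refine Finset.mem_filter.2 ⟨hjs, ?_, ?_⟩
        · have := hmax j hjs; linarith
        · have := Finset.inf'_le b hj; linarith
      have hcard : N.card + 1 ≤ K := by
        have h1 : (insert i₀ N).card = N.card + 1 := Finset.card_insert_of_notMem hi₀N
        calc N.card + 1 = (insert i₀ N).card := h1.symm
          _ ≤ _ := Finset.card_le_card hcover
          _ ≤ K := hcov t₀
      have himg : N.image c ⊆ Finset.range K := by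
        intro v hv
        obtain ⟨j, hj, rfl⟩ := Finset.mem_image.1 hv
        exact Finset.mem_range.2 (hcK j (hNsub j hj))
      have hfree : (Finset.range K \ N.image c).Nonempty := by
        apply Finset.card_pos.1
        rw [Finset.card_sdiff_of_subset himg, Finset.card_range]
        have h2 : (N.image c).card ≤ N.card := Finset.card_image_le
        omega
      obtain ⟨v, hv⟩ := hfree
      have hvK : v < K := Finset.mem_range.1 (Finset.mem_sdiff.1 hv).1
      have hvnot : v ∉ N.image c := (Finset.mem_sdiff.1 hv).2
      refine ⟨Function.update c i₀ v, ?_, ?_⟩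
      · intro i hi
        by_cases h : i = i₀
        · subst h; rw [Function.update_self]; exact hvK
        · rw [Function.update_of_ne h]; exact hcK i (Finset.mem_erase.2 ⟨h, hi⟩)
      · intro i hi j hj hij hcij
        by_cases h1 : i = i₀ <;> by_cases h2 : j = i₀
        · exact absurd (h1.trans h2.symm) hij
        · subst h1
          rw [Function.update_self, Function.update_of_ne h2] at hcij
          have hjs' : j ∈ s' := Finset.mem_erase.2 ⟨h2, hj⟩
          have hjN : j ∉ N := fun hjN => hvnot (Finset.mem_image.2 ⟨j, hjN, hcij.symm⟩)
          have h3 : ¬(a j < b i ∧ a i < b j) := by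
            intro hcon
            exact hjN (Finset.mem_filter.2 ⟨hjs', hcon⟩)
          rcases not_and_or.1 h3 with h4 | h4
          · exact Or.inl (not_lt.1 h4)
          · exact Or.inr (not_lt.1 h4)
        · subst h2
          rw [Function.update_self, Function.update_of_ne h1] at hcij
          have his' : i ∈ s' := Finset.mem_erase.2 ⟨h1, hi⟩
          have hiN : i ∉ N := fun hiN => hvnot (Finset.mem_image.2 ⟨i, hiN, hcij⟩)
          have h3 : ¬(a i < b j ∧ a j < b i) := by
            intro hcon
            exact hiN (Finset.mem_filter.2 ⟨his', hcon⟩)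
          rcases not_and_or.1 h3 with h4 | h4
          · exact Or.inr (not_lt.1 h4)
          · exact Or.inl (not_lt.1 h4)
        · rw [Function.update_of_ne h1, Function.update_of_ne h2] at hcij
          exact hcd i (Finset.mem_erase.2 ⟨h1, hi⟩) j (Finset.mem_erase.2 ⟨h2, hj⟩) hij hcij

lemma sumQ0 {ι : Type*} [DecidableEq ι] {g : ℝ → ℝ} (hg : DualFeasible g) (K : ℕ)
    (s : Finset ι) (a b : ι → ℝ)
    (hab : ∀ i ∈ s, 0 ≤ a i ∧ a i ≤ b i ∧ b i ≤ 1)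
    (hcov : ∀ t : ℝ, (s.filter (fun i => a i < t ∧ t < b i)).card ≤ K) :
    (∑ i ∈ s, g (b i - a i)) ≤ K := by
  classical
  set s₁ := s.filter (fun i => a i < b i) with hs₁
  have hsplit := Finset.sum_filter_add_sum_filter_not s (fun i => a i < b i)
      (fun i => g (b i - a i))
  have hdeg : (∑ i ∈ s.filter (fun i => ¬ a i < b i), g (b i - a i)) = 0 := by
    apply Finset.sum_eq_zero
    intro i hi
    obtain ⟨his, hneg⟩ := Finset.mem_filter.1 hi
    have heq : b i - a i = 0 := by
      have := (hab i his).2.1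
      have := not_lt.1 hneg
      linarith
    rw [heq, dff_zero hg]
  obtain ⟨c, hcK, hcd⟩ := coloring K a b s₁
    (fun i hi => (Finset.mem_filter.1 hi).2)
    (fun t => le_trans (Finset.card_le_card
      (Finset.filter_subset_filter _ (Finset.filter_subset _ _))) (hcov t))
  have hclass : ∀ v ∈ Finset.range K,
      (∑ i ∈ s₁.filter (fun i => c i = v), g (b i - a i)) ≤ 1 := by
    intro v _
    set cls := s₁.filter (fun i => c i = v) with hcls
    have hclsub : ∀ i ∈ cls, i ∈ s := fun i hi =>
      Finset.mem_of_mem_filter i (Finset.mem_of_mem_filter i hi)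
    have hcov1 : ∀ t : ℝ, (∑ i ∈ cls.filter (fun i => a i < t ∧ t < b i),
        (1:ℝ)) ≤ 1 := by
      intro t
      have hone : (cls.filter (fun i => a i < t ∧ t < b i)).card ≤ 1 := by
        apply Finset.card_le_one.2
        intro i hi j hj
        by_contra hij
        obtain ⟨hi1, hi2⟩ := Finset.mem_filter.1 hi
        obtain ⟨hj1, hj2⟩ := Finset.mem_filter.1 hj
        have hci : c i = v := (Finset.mem_filter.1 hi1).2
        have hcj : c j = v := (Finset.mem_filter.1 hj1).2
        have := hcd i (Finset.mem_of_mem_filter i hi1) j (Finset.mem_of_mem_filter j hj1)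
          hij (hci.trans hcj.symm)
        rcases this with h | h
        · linarith [hi2.2, hj2.1]
        · linarith [hj2.2, hi2.1]
      calc (∑ _i ∈ cls.filter (fun i => a i < t ∧ t < b i), (1:ℝ))
          = (cls.filter (fun i => a i < t ∧ t < b i)).card := by simp
        _ ≤ 1 := by exact_mod_cast hone
    have hib := integ_bound cls a b (fun _ => (1:ℝ)) 1 1 zero_le_one zero_le_one
      (fun i _ => zero_le_one)
      (fun i hi => ⟨(hab i (hclsub i hi)).1, (hab i (hclsub i hi)).2.1,
        (hab i (hclsub i hi)).2.2⟩)
      hcov1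
    have hsumw : (∑ i ∈ cls, (b i - a i)) ≤ 1 := by
      have e4 : (∑ i ∈ cls, (b i - a i)) = ∑ i ∈ cls, (fun _ => (1:ℝ)) i * (b i - a i) := by
        apply Finset.sum_congr rfl
        intro i _
        ring
      rw [e4]
      calc _ ≤ (1:ℝ) * 1 := hib
        _ = 1 := by norm_num
    apply dff_finset hg
    · intro i hi
      have h := hab i (hclsub i hi)
      exact ⟨by linarith [h.2.1], by linarith [h.1, h.2.2]⟩
    · exact hsumw
  have hfib : (∑ v ∈ Finset.range K, ∑ i ∈ s₁.filter (fun i => c i = v),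
      g (b i - a i)) = ∑ i ∈ s₁, g (b i - a i) :=
    Finset.sum_fiberwise_of_maps_to (fun i hi => Finset.mem_range.2 (hcK i hi)) _
  have h9 : (∑ i ∈ s₁, g (b i - a i)) ≤ K := by
    rw [← hfib]
    calc (∑ v ∈ Finset.range K, ∑ i ∈ s₁.filter (fun i => c i = v), g (b i - a i))
        ≤ ∑ _v ∈ Finset.range K, (1:ℝ) := Finset.sum_le_sum hclass
      _ = K := by simp
  calc (∑ i ∈ s, g (b i - a i))
      = (∑ i ∈ s₁, g (b i - a i)) +
        (∑ i ∈ s.filter (fun i => ¬ a i < b i), g (b i - a i)) := hsplit.symm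
    _ = (∑ i ∈ s₁, g (b i - a i)) := by rw [hdeg, add_zero]
    _ ≤ K := h9

lemma sumP {ι : Type*} [DecidableEq ι] {g : ℝ → ℝ} (hg : DualFeasible g) (bb : ℝ)
    (hb : 0 ≤ bb) (s : Finset ι) (a b v : ι → ℝ)
    (hv : ∀ i ∈ s, 0 ≤ v i)
    (hab : ∀ i ∈ s, 0 ≤ a i ∧ a i ≤ b i ∧ b i ≤ 1)
    (hcov : ∀ t : ℝ, (∑ i ∈ s.filter (fun i => a i < t ∧ t < b i), v i) ≤ bb) :
    (∑ i ∈ s, v i * g (b i - a i)) ≤ bb := by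
  classical
  have hg01 : ∀ i ∈ s, g (b i - a i) ∈ Set.Icc (0:ℝ) 1 := by
    intro i hi
    obtain ⟨h1, h2, h3⟩ := hab i hi
    exact hg.1 _ ⟨by linarith, by linarith⟩
  have main : ∀ D : ℕ, 0 < D → (∑ i ∈ s, v i * g (b i - a i)) ≤ bb + s.card / D := by
    intro D hD
    have hDR : (0:ℝ) < D := by exact_mod_cast hD
    set n : ι → ℕ := fun i => ⌈v i * D⌉₊ with hn
    set K : ℕ := ⌊bb * D⌋₊ + s.card with hK
    set S := s.sigma (fun i => Finset.range (n i)) with hS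
    have hcovS : ∀ t : ℝ, (S.filter (fun p => a p.1 < t ∧ t < b p.1)).card ≤ K := by
      intro t
      have e1 : S.filter (fun p => a p.1 < t ∧ t < b p.1)
          = (s.filter (fun i => a i < t ∧ t < b i)).sigma (fun i => Finset.range (n i)) := by
        ext p
        simp only [hS, Finset.mem_sigma, Finset.mem_filter]
        tauto
      rw [e1, Finset.card_sigma]
      simp only [Finset.card_range]
      have h2 : ((∑ i ∈ s.filter (fun i => a i < t ∧ t < b i), n i : ℕ) : ℝ)
          ≤ bb * D + s.card := by
        push_cast
        have hle : ∀ i ∈ s.filter (fun i => a i < t ∧ t < b i),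
            ((n i : ℝ)) ≤ v i * D + 1 := by
          intro i hi
          have hvi := hv i (Finset.mem_of_mem_filter i hi)
          exact (Nat.ceil_lt_add_one (by positivity)).le
        calc (∑ i ∈ s.filter (fun i => a i < t ∧ t < b i), (n i : ℝ))
            ≤ ∑ i ∈ s.filter (fun i => a i < t ∧ t < b i), (v i * D + 1) :=
              Finset.sum_le_sum hle
          _ = (∑ i ∈ s.filter (fun i => a i < t ∧ t < b i), v i) * D
              + (s.filter (fun i => a i < t ∧ t < b i)).card := by
              rw [Finset.sum_add_distrib, Finset.sum_mul]
              simp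
          _ ≤ bb * D + s.card := by
              have h3 := hcov t
              have h4 : ((s.filter (fun i => a i < t ∧ t < b i)).card : ℝ) ≤ s.card := by
                exact_mod_cast Finset.card_le_card (Finset.filter_subset _ _)
              nlinarith
      rw [hK, ← Nat.floor_add_natCast (by positivity : (0:ℝ) ≤ bb * D) s.card]
      exact Nat.le_floor h2
    have hQ := sumQ0 hg K S (fun p => a p.1) (fun p => b p.1)
      (fun p hp => hab p.1 (Finset.mem_sigma.1 hp).1) hcovS
    have e2 : (∑ p ∈ S, g (b p.1 - a p.1)) = ∑ i ∈ s, (n i : ℝ) * g (b i - a i) := by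
      rw [hS, Finset.sum_sigma]
      apply Finset.sum_congr rfl
      intro i _
      simp [Finset.sum_const, Finset.card_range, nsmul_eq_mul]
    have hKle : ((K:ℕ):ℝ) ≤ bb * D + s.card := by
      rw [hK]
      push_cast
      have := Nat.floor_le (by positivity : (0:ℝ) ≤ bb * D)
      linarith
    calc (∑ i ∈ s, v i * g (b i - a i))
        ≤ ∑ i ∈ s, ((n i : ℝ)/D) * g (b i - a i) := by
          apply Finset.sum_le_sum
          intro i hi
          apply mul_le_mul_of_nonneg_right _ ((hg01 i hi).1)
          rw [le_div_iff₀ hDR]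
          exact Nat.le_ceil _
      _ = (1/(D:ℝ)) * ∑ i ∈ s, (n i : ℝ) * g (b i - a i) := by
          rw [Finset.mul_sum]
          apply Finset.sum_congr rfl
          intro i _
          ring
      _ ≤ (1/(D:ℝ)) * K := by
          apply mul_le_mul_of_nonneg_left _ (by positivity)
          rw [← e2]
          exact hQ
      _ ≤ bb + s.card / D := by
          have h10 : (1/(D:ℝ)) * K ≤ (1/(D:ℝ)) * (bb * D + s.card) :=
            mul_le_mul_of_nonneg_left hKle (by positivity)
          have h11 : (1/(D:ℝ)) * (bb * D + s.card) = bb + s.card / D := by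
            field_simp
          linarith
  apply le_of_forall_pos_le_add
  intro ε hε
  obtain ⟨D, hD⟩ := exists_nat_gt ((s.card:ℝ) / ε)
  have hDR : (0:ℝ) < D := lt_of_le_of_lt (by positivity) hD
  have hD0 : 0 < D := by exact_mod_cast hDR
  have h7 := main D hD0
  have h8 : (s.card:ℝ)/D ≤ ε := by
    rw [div_le_iff₀ hDR]
    have h9 := (div_lt_iff₀ hε).1 hD
    linarith
  linarith


/-- Upper bound on the modified volume via slicing: for any feasible axis-parallel
packing of 3D boxes into the strip `[0,1] × [0,1] × [0,H]`, the total modified volume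
`Σ f_k(l R) * g(w R) * h R` is at most `T_k * H`, where `g` is dual feasible
(and `f_k / T_k` is dual feasible). -/
theorem modified_volume_upper_bound (k m : ℕ) (hk : 2 ≤ k)
    (hm1 : tSeq m < k) (hm2 : k ≤ tSeq (m + 1))
    (g : ℝ → ℝ) (hg : DualFeasible g)
    (n : ℕ) (l w h x y z : Fin n → ℝ) (H : ℝ) (hH : 0 ≤ H)
    (hside : ∀ i, 0 < l i ∧ l i ≤ 1 ∧ 0 < w i ∧ w i ≤ 1 ∧ 0 < h i ∧ h i ≤ 1)
    (hin : ∀ i, 0 ≤ x i ∧ x i + l i ≤ 1 ∧ 0 ≤ y i ∧ y i + w i ≤ 1 ∧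
      0 ≤ z i ∧ z i + h i ≤ H)
    (hdisj : ∀ i j, i ≠ j →
      (Set.Ioo (x i) (x i + l i) ×ˢ Set.Ioo (y i) (y i + w i) ×ˢ
          Set.Ioo (z i) (z i + h i)) ∩
        (Set.Ioo (x j) (x j + l j) ×ˢ Set.Ioo (y j) (y j + w j) ×ˢ
          Set.Ioo (z j) (z j + h j)) = ∅) :
    (∑ i, fHarm k (l i) * g (w i) * h i) ≤ TkVal k m * H := by
  classical
  have hkR : (2:ℝ) ≤ (k:ℝ) := by exact_mod_cast hk
  have hk1 : (0:ℝ) < (k:ℝ) - 1 := by linarith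
  have hTk0 : 0 ≤ TkVal k m := by
    unfold TkVal
    have h1 : 0 ≤ ∑ i ∈ Finset.Icc 1 m, (1:ℝ)/(tSeq i:ℝ) :=
      Finset.sum_nonneg (fun i _ => by positivity)
    have h2 : 0 ≤ (1/(tSeq (m+1):ℝ)) * ((k:ℝ)/((k:ℝ)-1)) :=
      mul_nonneg (by positivity) (div_nonneg (by positivity) hk1.le)
    linarith
  have hgw : ∀ i, 0 ≤ g (w i) := by
    intro i
    exact (hg.1 (w i) ⟨(hside i).2.2.1.le, (hside i).2.2.2.1⟩).1
  have hcovZ : ∀ t : ℝ, (∑ i ∈ (Finset.univ : Finset (Fin n)).filter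
      (fun i => z i < t ∧ t < z i + h i), fHarm k (l i) * g ((y i + w i) - y i))
      ≤ TkVal k m := by
    intro t
    set st := (Finset.univ : Finset (Fin n)).filter
      (fun i => z i < t ∧ t < z i + h i) with hst
    have hcovY : ∀ t' : ℝ, (∑ i ∈ st.filter (fun i => y i < t' ∧ t' < y i + w i),
        fHarm k (l i)) ≤ TkVal k m := by
      intro t'
      apply lemA k m hk hm1 hm2 _ l (fun i _ => (hside i).1.le)
      set su := st.filter (fun i => y i < t' ∧ t' < y i + w i) with hsu
      have hx1 : ∀ p : ℝ, (∑ i ∈ su.filter (fun i => x i < p ∧ p < x i + l i),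
          (fun _ => (1:ℝ)) i) ≤ 1 := by
        intro p
        have hone : (su.filter (fun i => x i < p ∧ p < x i + l i)).card ≤ 1 := by
          apply Finset.card_le_one.2
          intro i hi j hj
          by_contra hij
          obtain ⟨hi1, hip⟩ := Finset.mem_filter.1 hi
          obtain ⟨hj1, hjp⟩ := Finset.mem_filter.1 hj
          obtain ⟨hi2, hiy⟩ := Finset.mem_filter.1 hi1
          obtain ⟨hj2, hjy⟩ := Finset.mem_filter.1 hj1
          have hiz := (Finset.mem_filter.1 hi2).2
          have hjz := (Finset.mem_filter.1 hj2).2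
          have hmemi : ((p, t', t) : ℝ × ℝ × ℝ) ∈
              (Set.Ioo (x i) (x i + l i) ×ˢ Set.Ioo (y i) (y i + w i) ×ˢ
                Set.Ioo (z i) (z i + h i)) :=
            ⟨⟨hip.1, hip.2⟩, ⟨hiy.1, hiy.2⟩, ⟨hiz.1, hiz.2⟩⟩
          have hmemj : ((p, t', t) : ℝ × ℝ × ℝ) ∈
              (Set.Ioo (x j) (x j + l j) ×ˢ Set.Ioo (y j) (y j + w j) ×ˢ
                Set.Ioo (z j) (z j + h j)) :=
            ⟨⟨hjp.1, hjp.2⟩, ⟨hjy.1, hjy.2⟩, ⟨hjz.1, hjz.2⟩⟩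
          have := hdisj i j hij
          rw [Set.eq_empty_iff_forall_notMem] at this
          exact this ((p, t', t) : ℝ × ℝ × ℝ) ⟨hmemi, hmemj⟩
        calc (∑ _i ∈ su.filter (fun i => x i < p ∧ p < x i + l i), (1:ℝ))
            = (su.filter (fun i => x i < p ∧ p < x i + l i)).card := by simp
          _ ≤ 1 := by exact_mod_cast hone
      have hib := integ_bound su x (fun i => x i + l i) (fun _ => (1:ℝ)) 1 1
        zero_le_one zero_le_one (fun i _ => zero_le_one)
        (fun i _ => ⟨(hin i).1, by show x i ≤ x i + l i; linarith [(hside i).1], (hin i).2.1⟩)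
        hx1
      have e4 : (∑ i ∈ su, l i) = ∑ i ∈ su, (fun _ => (1:ℝ)) i * ((x i + l i) - x i) := by
        apply Finset.sum_congr rfl
        intro i _
        ring
      rw [e4]
      calc _ ≤ (1:ℝ) * 1 := hib
        _ = 1 := by norm_num
    have h2 := sumP hg (TkVal k m) hTk0 st y (fun i => y i + w i) (fun i => fHarm k (l i))
      (fun i _ => fHarm_nonneg k hk (hside i).1.le)
      (fun i _ => ⟨(hin i).2.2.1, by show y i ≤ y i + w i; linarith [(hside i).2.2.1], (hin i).2.2.2.1⟩)
      hcovY
    exact h2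
  have hfin := integ_bound (Finset.univ : Finset (Fin n)) z (fun i => z i + h i)
    (fun i => fHarm k (l i) * g ((y i + w i) - y i)) (TkVal k m) H hTk0 hH
    (fun i _ => mul_nonneg (fHarm_nonneg k hk (hside i).1.le)
      (by rw [add_sub_cancel_left]; exact hgw i))
    (fun i _ => ⟨(hin i).2.2.2.2.1, by show z i ≤ z i + h i; linarith [(hside i).2.2.2.2.1], (hin i).2.2.2.2.2⟩)
    hcovZ
  calc (∑ i, fHarm k (l i) * g (w i) * h i)
      = ∑ i : Fin n, (fHarm k (l i) * g ((y i + w i) - y i)) * ((z i + h i) - z i) := by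
        apply Finset.sum_congr rfl
        intro i _
        rw [add_sub_cancel_left, add_sub_cancel_left]
    _ ≤ TkVal k m * H := hfin
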